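/- Let (X,d) be a metric space, ω : X → (0,∞) a Borel function, and γ : [s,t] → X a continuous curve with integrable upper speed m such that L := ∫_s^t m(r)/ω(γ(r)) dr < ∞. Then there exists a continuous curve η : [0,L] → X with η(0) = γ(s) and η(L) = γ(t) such that r ↦ ω(η(r)) is an upper speed of η on [0,L]. If moreover ∫_s^t m(r)·ω(γ(r)) dr < ∞, then η can be chosen so that in addition ∫_0^L ω(η(r))² dr ≤ ∫_s^t m(r)·ω(γ(r)) dr. -/

import Mathlib

open MeasureTheory Set Filter
open scoped ENNReal

noncomputable section

/-- `m` is a (nonnegative, integrable) upper speed of the curve `γ` on `[a,b]`: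
`dist (γ s) (γ t) ≤ ∫_s^t m` for all `a ≤ s ≤ t ≤ b`. -/
def IsUpperSpeedOn {X : Type*} [MetricSpace X] (γ : ℝ → X) (m : ℝ → ℝ) (a b : ℝ) : Prop :=
  (∀ r ∈ Set.Icc a b, 0 ≤ m r) ∧
  IntervalIntegrable m MeasureTheory.volume a b ∧
  ∀ s t : ℝ, a ≤ s → s ≤ t → t ≤ b → dist (γ s) (γ t) ≤ ∫ r in s..t, m r

/-- The Finsler cost `d_G(x,y)`: the infimum of `∫_0^1 m(t) G(γ(t)) dt` over continuous
curves `γ : [0,1] → X` joining `x` to `y` with integrable upper speed `m`;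
`+∞` if no admissible pair exists. -/
def finslerCost {X : Type*} [MetricSpace X] (G : X → ℝ) (x y : X) : ℝ≥0∞ :=
  sInf { c : ℝ≥0∞ | ∃ γ : ℝ → X, ∃ m : ℝ → ℝ,
    ContinuousOn γ (Set.Icc 0 1) ∧ γ 0 = x ∧ γ 1 = y ∧
    IsUpperSpeedOn γ m 0 1 ∧
    c = ∫⁻ t in Set.Ioc (0:ℝ) 1, ENNReal.ofReal (m t * G (γ t)) }

/-- The action `E_G^T(x,y)`: the infimum of `∫_0^T ((1/2) m(t)² + (1/2) G(γ(t))²) dt` over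
continuous curves `γ : [0,T] → X` joining `x` to `y` with square-integrable upper speed `m`;
`+∞` if no admissible pair exists. -/
def actionCost {X : Type*} [MetricSpace X] (G : X → ℝ) (T : ℝ) (x y : X) : ℝ≥0∞ :=
  sInf { c : ℝ≥0∞ | ∃ γ : ℝ → X, ∃ m : ℝ → ℝ,
    ContinuousOn γ (Set.Icc 0 T) ∧ γ 0 = x ∧ γ T = y ∧
    IsUpperSpeedOn γ m 0 T ∧
    IntervalIntegrable (fun t => (m t) ^ 2) MeasureTheory.volume 0 T ∧
    c = ∫⁻ t in Set.Ioc (0:ℝ) T,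
          ENNReal.ofReal ((1/2) * (m t) ^ 2 + (1/2) * (G (γ t)) ^ 2) }

/-- `G` is a strong upper gradient of `v`: along every continuous curve with integrable
upper speed `m`, `|v(γ t) − v(γ s)| ≤ ∫_s^t G(γ r) m(r) dr` (the right-hand side taken as a
possibly infinite nonnegative integral). -/
def IsStrongUpperGradient {X : Type*} [MetricSpace X] (G v : X → ℝ) : Prop :=
  ∀ (a b : ℝ) (γ : ℝ → X) (m : ℝ → ℝ),
    ContinuousOn γ (Set.Icc a b) → IsUpperSpeedOn γ m a b →
    ∀ s t : ℝ, a ≤ s → s ≤ t → t ≤ b →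
      ENNReal.ofReal |v (γ t) - v (γ s)| ≤
        ∫⁻ r in Set.Ioc s t, ENNReal.ofReal (G (γ r) * m r)

/-- A gradient-flow curve (curve of maximal slope in energy-dissipation form) of `v` with
respect to `G`: `η` is continuous on `[0,∞)`, `G∘η` is square-integrable on compacts and is
an upper speed of `η` on every compact subinterval of `[0,∞)`, and the energy-dissipation
equality `v(η s) − v(η t) = ∫_s^t G(η r)² dr` holds for `0 ≤ s ≤ t`. -/
def IsGradientFlowCurve {X : Type*} [MetricSpace X] (v G : X → ℝ) (η : ℝ → X) : Prop :=
  ContinuousOn η (Set.Ici 0) ∧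
  (∀ b : ℝ, 0 ≤ b → IntervalIntegrable (fun t => (G (η t)) ^ 2) MeasureTheory.volume 0 b) ∧
  (∀ a b : ℝ, 0 ≤ a → a ≤ b → IsUpperSpeedOn η (fun t => G (η t)) a b) ∧
  ∀ s t : ℝ, 0 ≤ s → s ≤ t → v (η s) - v (η t) = ∫ r in s..t, (G (η r)) ^ 2

private lemma reparam_main {X : Type*} [MetricSpace X] [MeasurableSpace X] [BorelSpace X]
    (ω : X → ℝ) (hωpos : ∀ x, 0 < ω x) (hωmeas : Measurable ω)
    (s t : ℝ) (hst : s ≤ t) (γ : ℝ → X) (m : ℝ → ℝ)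
    (hγcont : ContinuousOn γ (Set.Icc s t)) (hm : IsUpperSpeedOn γ m s t)
    (hLint : IntervalIntegrable (fun r => m r / ω (γ r)) MeasureTheory.volume s t)
    (L : ℝ) (hL : L = ∫ r in s..t, m r / ω (γ r)) :
    ∃ η : ℝ → X, ContinuousOn η (Set.Icc 0 L) ∧ η 0 = γ s ∧ η L = γ t ∧
      IsUpperSpeedOn η (fun r => ω (η r)) 0 L ∧
      (IntervalIntegrable (fun r => m r * ω (γ r)) MeasureTheory.volume s t →
        (∫ r in (0:ℝ)..L, (ω (η r)) ^ 2) ≤ ∫ r in s..t, m r * ω (γ r)) := by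
  obtain ⟨hm_nn, hm_int, hm_dist⟩ := hm
  -- clamp into [s,t]
  set c : ℝ → ℝ := fun r => max s (min r t) with hc_def
  have hc_cont : Continuous c := continuous_const.max (continuous_id.min continuous_const)
  have hc_mem : ∀ r, c r ∈ Icc s t := fun r => ⟨le_max_left _ _, max_le hst (min_le_right _ _)⟩
  have hc_id : ∀ r ∈ Icc s t, c r = r := fun r hr => by
    simp only [hc_def, min_eq_left hr.2, max_eq_right hr.1]
  have hc_mono : Monotone c := fun u v huv => max_le_max le_rfl (min_le_min huv le_rfl)
  set γ' : ℝ → X := fun r => γ (c r) with hγ'_def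
  have hγ'cont : Continuous γ' := hγcont.comp_continuous hc_cont hc_mem
  have hγ'eq : ∀ r ∈ Icc s t, γ' r = γ r := fun r hr => congrArg γ (hc_id r hr)
  -- measurable replacement of m
  have h1m : IntegrableOn m (Ioc s t) := hm_int.1
  have hms := h1m.aestronglyMeasurable
  set m₀ : ℝ → ℝ := fun r => if r ∈ Ioc s t then max 0 (hms.mk m r) else 0 with hm₀def
  have hm₀meas : Measurable m₀ :=
    Measurable.ite measurableSet_Ioc (measurable_const.max hms.measurable_mk) measurable_const
  have hm₀nn : ∀ r, 0 ≤ m₀ r := fun r => by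
    rw [hm₀def]
    dsimp only
    split_ifs <;> simp
  have hm_ae : ∀ᵐ r ∂(volume.restrict (Ioc s t)), m r = m₀ r := by
    filter_upwards [hms.ae_eq_mk, ae_restrict_mem measurableSet_Ioc] with r h1 h2
    have h3 : 0 ≤ m r := hm_nn r (Ioc_subset_Icc_self h2)
    simp only [hm₀def, if_pos h2, ← h1, max_eq_right h3]
  have hm_ae' : ∀ᵐ r ∂volume, r ∈ Ioc s t → m r = m₀ r :=
    (ae_restrict_iff' measurableSet_Ioc).1 hm_ae
  have hsubIoc : ∀ u v : ℝ, u ∈ Icc s t → v ∈ Icc s t → Set.uIoc u v ⊆ Ioc s t := by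
    intro u v hu hv
    show Set.Ioc (min u v) (max u v) ⊆ Ioc s t
    exact Set.Ioc_subset_Ioc (le_inf hu.1 hv.1) (sup_le hu.2 hv.2)
  have hmm₀ : ∀ u v : ℝ, u ∈ Icc s t → v ∈ Icc s t →
      (∫ r in u..v, m r) = ∫ r in u..v, m₀ r := by
    intro u v hu hv
    refine intervalIntegral.integral_congr_ae ?_
    filter_upwards [hm_ae'] with r hr hmem
    exact hr (hsubIoc u v hu hv hmem)
  have hm₀int : IntegrableOn m₀ (Ioc s t) := h1m.congr_fun_ae hm_ae
  have hm₀int' : ∀ u v : ℝ, u ∈ Icc s t → v ∈ Icc s t → IntervalIntegrable m₀ volume u v := by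
    intro u v hu hv
    rw [intervalIntegrable_iff]
    exact hm₀int.mono_set (hsubIoc u v hu hv)
  have hdist' : ∀ u v : ℝ, s ≤ u → u ≤ v → v ≤ t →
      dist (γ' u) (γ' v) ≤ ∫ r in u..v, m₀ r := by
    intro u v h1 h2 h3
    have hu : u ∈ Icc s t := ⟨h1, h2.trans h3⟩
    have hv : v ∈ Icc s t := ⟨h1.trans h2, h3⟩
    rw [hγ'eq u hu, hγ'eq v hv, ← hmm₀ u v hu hv]
    exact hm_dist u v h1 h2 h3
  -- the density f and its primitive σ
  set f : ℝ → ℝ := fun r => m₀ r / ω (γ' r) with hf_def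
  have hf_nn : ∀ r, 0 ≤ f r := fun r => div_nonneg (hm₀nn r) (hωpos _).le
  have hf_meas : Measurable f := hm₀meas.div (hωmeas.comp hγ'cont.measurable)
  have hface : ∀ᵐ r ∂(volume.restrict (Ioc s t)), m r / ω (γ r) = f r := by
    filter_upwards [hm_ae, ae_restrict_mem measurableSet_Ioc] with r h1 h2
    rw [hf_def]
    simp only
    rw [← h1, hγ'eq r (Ioc_subset_Icc_self h2)]
  have hfint : IntegrableOn f (Ioc s t) := hLint.1.congr_fun_ae hface
  have hfint' : ∀ u v : ℝ, u ∈ Icc s t → v ∈ Icc s t → IntervalIntegrable f volume u v := by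
    intro u v hu hv
    rw [intervalIntegrable_iff]
    exact hfint.mono_set (hsubIoc u v hu hv)
  set σ : ℝ → ℝ := fun r => ∫ u in s..(c r), f u with hσ_def
  have hσeq : ∀ r ∈ Icc s t, σ r = ∫ u in s..r, f u := fun r hr => by
    rw [hσ_def]; simp only [hc_id r hr]
  have hσcont : Continuous σ := by
    have hprim : ContinuousOn (fun x => ∫ u in s..x, f u) (Icc s t) := by
      have h := intervalIntegral.continuousOn_primitive_interval'
        (hfint' s t ⟨le_rfl, hst⟩ ⟨hst, le_rfl⟩) left_mem_uIcc
      rwa [uIcc_of_le hst] at h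
    exact hprim.comp_continuous hc_cont hc_mem
  have hσc : ∀ r, σ (c r) = σ r := fun r => by
    rw [hσ_def]; simp only [hc_id (c r) (hc_mem r)]
  have hσmono' : ∀ u v : ℝ, u ∈ Icc s t → v ∈ Icc s t → u ≤ v → σ u ≤ σ v := by
    intro u v hu hv huv
    have h2 := intervalIntegral.integral_add_adjacent_intervals
      (hfint' s u ⟨le_rfl, hst⟩ hu) (hfint' u v hu hv)
    have h3 : 0 ≤ ∫ r in u..v, f r :=
      intervalIntegral.integral_nonneg huv (fun x _ => hf_nn x)
    rw [hσeq u hu, hσeq v hv]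
    linarith
  have hσmono : Monotone σ := fun u v huv => by
    rw [← hσc u, ← hσc v]
    exact hσmono' _ _ (hc_mem u) (hc_mem v) (hc_mono huv)
  have hσs : σ s = 0 := by
    rw [hσeq s ⟨le_rfl, hst⟩, intervalIntegral.integral_same]
  have hLf : L = ∫ r in s..t, f r := by
    rw [hL]
    refine intervalIntegral.integral_congr_ae ?_
    have := (ae_restrict_iff' measurableSet_Ioc).1 hface
    filter_upwards [this] with r hr hmem
    exact hr (hsubIoc s t ⟨le_rfl, hst⟩ ⟨hst, le_rfl⟩ hmem)
  have hσt : σ t = L := by rw [hσeq t ⟨hst, le_rfl⟩]; exact hLf.symm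
  have hL0 : 0 ≤ L := by
    rw [← hσs, ← hσt]; exact hσmono' s t ⟨le_rfl, hst⟩ ⟨hst, le_rfl⟩ hst
  -- the clamp on [0,L]
  set e : ℝ → ℝ := fun x => max 0 (min x L) with he_def
  have he_mono : Monotone e := fun u v huv => max_le_max le_rfl (min_le_min huv le_rfl)
  have he_mem : ∀ x, e x ∈ Icc 0 L := fun x => ⟨le_max_left _ _, max_le hL0 (min_le_right _ _)⟩
  have he_id : ∀ x ∈ Icc 0 L, e x = x := fun x hx => by
    simp only [he_def, min_eq_left hx.2, max_eq_right hx.1]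
  -- the inverse τ
  set S : ℝ → Set ℝ := fun x => {r ∈ Icc s t | e x ≤ σ r} with hS_def
  have hS_closed : ∀ x, IsClosed (S x) :=
    fun x => IsClosed.inter isClosed_Icc (isClosed_le continuous_const hσcont)
  have hS_ne : ∀ x, (S x).Nonempty := fun x => ⟨t, ⟨hst, le_rfl⟩, by rw [hσt]; exact (he_mem x).2⟩
  have hS_bdd : ∀ x, BddBelow (S x) := fun x => ⟨s, fun r hr => hr.1.1⟩
  set τ : ℝ → ℝ := fun x => sInf (S x) with hτ_def
  have hτ_mem : ∀ x, τ x ∈ S x := fun x => (hS_closed x).csInf_mem (hS_ne x) (hS_bdd x)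
  have hτ_Icc : ∀ x, τ x ∈ Icc s t := fun x => (hτ_mem x).1
  have hτ_ge : ∀ x, e x ≤ σ (τ x) := fun x => (hτ_mem x).2
  have hτ_le : ∀ x r, r ∈ S x → τ x ≤ r := fun x r hr => csInf_le (hS_bdd x) hr
  have hστ : ∀ x, σ (τ x) = e x := by
    intro x
    refine le_antisymm ?_ (hτ_ge x)
    have hIVT := intermediate_value_Icc (hτ_Icc x).1
      (hσcont.continuousOn : ContinuousOn σ (Icc s (τ x)))
    have hx : e x ∈ Icc (σ s) (σ (τ x)) := ⟨by rw [hσs]; exact (he_mem x).1, hτ_ge x⟩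
    obtain ⟨r, hr, hrx⟩ := hIVT hx
    have hrS : r ∈ S x := ⟨⟨hr.1, hr.2.trans (hτ_Icc x).2⟩, le_of_eq hrx.symm⟩
    have := hτ_le x r hrS
    calc σ (τ x) ≤ σ r := hσmono this
      _ = e x := hrx
  have hτ_mono : Monotone τ := fun x y hxy =>
    csInf_le_csInf (hS_bdd x) (hS_ne y) (fun r hr => ⟨hr.1, (he_mono hxy).trans hr.2⟩)
  have hτ_meas : Measurable τ := hτ_mono.measurable
  have hτ_iff : ∀ x, 0 < e x → ∀ r : ℝ, (τ x ≤ r ↔ e x ≤ σ r) := by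
    intro x hx r
    constructor
    · intro h; rw [← hστ x]; exact hσmono h
    · intro h
      rcases le_or_gt s r with hsr | hsr
      · have hcr : c r ≤ r := max_le hsr (min_le_left r t)
        exact (hτ_le x (c r) ⟨hc_mem r, by rwa [hσc r]⟩).trans hcr
      · exfalso
        have hcs : c r = s := by
          simp only [hc_def, min_eq_left (hsr.le.trans hst), max_eq_left hsr.le]
        have : σ r = 0 := by rw [← hσc r, hcs, hσs]
        rw [this] at h
        linarith
  set η : ℝ → X := fun x => γ' (τ x) with hη_def
  have hωη_meas : Measurable (fun x => ω (η x)) :=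
    hωmeas.comp (hγ'cont.measurable.comp hτ_meas)
  have hτ0 : τ 0 = s := by
    refine le_antisymm (hτ_le 0 s ⟨⟨le_rfl, hst⟩, ?_⟩) (hτ_Icc 0).1
    rw [he_id 0 ⟨le_rfl, hL0⟩, hσs]
  have hη0 : η 0 = γ s := by
    rw [hη_def]; simp only [hτ0]; exact hγ'eq s ⟨le_rfl, hst⟩
  -- the density measure identities
  set δ : ℝ → ℝ≥0∞ := fun r => ENNReal.ofReal (f r) with hδ_def
  have hδ_meas : Measurable δ := ENNReal.measurable_ofReal.comp hf_meas
  have lemA : ∀ u v : ℝ, s ≤ u → v ≤ t →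
      ∫⁻ x in Ioc u v, δ x = ENNReal.ofReal (σ v - σ u) := by
    intro u v hu hv
    rcases le_or_gt u v with huv | huv
    · have huI : u ∈ Icc s t := ⟨hu, huv.trans hv⟩
      have hvI : v ∈ Icc s t := ⟨hu.trans huv, hv⟩
      have h2 := intervalIntegral.integral_add_adjacent_intervals
        (hfint' s u ⟨le_rfl, hst⟩ huI) (hfint' u v huI hvI)
      have h1 : σ v - σ u = ∫ r in Ioc u v, f r := by
        rw [hσeq u huI, hσeq v hvI, ← intervalIntegral.integral_of_le huv]
        linarith
      rw [h1]
      exact (ofReal_integral_eq_lintegral_ofReal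
        (hfint.mono_set (Ioc_subset_Ioc hu hv))
        (Eventually.of_forall fun x => hf_nn x)).symm
    · have h9 : σ v ≤ σ u := hσmono huv.le
      rw [Set.Ioc_eq_empty (not_lt.2 huv.le), ENNReal.ofReal_eq_zero.2 (by linarith)]
      simp
  have lemB : ∀ a b : ℝ, 0 ≤ a → a ≤ b → b ≤ L →
      Measure.map τ (volume.restrict (Ioc a b)) =
        (volume.restrict (Ioc (τ a) (τ b))).withDensity δ := by
    intro a b ha hab hbL
    have haI : a ∈ Icc 0 L := ⟨ha, hab.trans hbL⟩
    have hbI : b ∈ Icc 0 L := ⟨ha.trans hab, hbL⟩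
    haveI hfin : IsFiniteMeasure (Measure.map τ (volume.restrict (Ioc a b))) := by
      constructor
      rw [Measure.map_apply hτ_meas MeasurableSet.univ]
      simp [Real.volume_Ioc]
    refine Measure.ext_of_Ioc _ _ (fun p q _ => ?_)
    rw [Measure.map_apply hτ_meas measurableSet_Ioc,
      Measure.restrict_apply (hτ_meas measurableSet_Ioc)]
    have hset : τ ⁻¹' Ioc p q ∩ Ioc a b = Ioc (max (σ p) a) (min (σ q) b) := by
      ext x
      simp only [Set.mem_inter_iff, Set.mem_preimage, Set.mem_Ioc, max_lt_iff, le_min_iff]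
      constructor
      · rintro ⟨⟨hpx, hxq⟩, hax, hxb⟩
        have hex : e x = x := he_id x ⟨ha.trans hax.le, hxb.trans hbL⟩
        have hpos : 0 < e x := by rw [hex]; exact ha.trans_lt hax
        have h1 : x ≤ σ q := by rw [← hex]; exact (hτ_iff x hpos q).1 hxq
        have h2 : σ p < x := by
          by_contra hcon
          push_neg at hcon
          have := (hτ_iff x hpos p).2 (by rwa [hex])
          exact absurd this (not_le.2 hpx)
        exact ⟨⟨h2, hax⟩, h1, hxb⟩
      · rintro ⟨⟨hpx, hax⟩, hxq, hxb⟩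
        have hex : e x = x := he_id x ⟨ha.trans hax.le, hxb.trans hbL⟩
        have hpos : 0 < e x := by rw [hex]; exact ha.trans_lt hax
        refine ⟨⟨?_, (hτ_iff x hpos q).2 (by rwa [hex])⟩, hax, hxb⟩
        by_contra hcon
        push_neg at hcon
        have := (hτ_iff x hpos p).1 hcon
        rw [hex] at this
        exact absurd this (not_le.2 hpx)
    rw [hset, Real.volume_Ioc,
      withDensity_apply _ measurableSet_Ioc,
      Measure.restrict_restrict measurableSet_Ioc, Set.Ioc_inter_Ioc,
      lemA (p ⊔ τ a) (q ⊓ τ b) (le_trans (hτ_Icc a).1 le_sup_right)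
        (le_trans inf_le_right (hτ_Icc b).2)]
    have hminq : σ (q ⊓ τ b) = min (σ q) b := by
      rw [hσmono.map_min, hστ b, he_id b hbI]
    have hmaxp : σ (p ⊔ τ a) = max (σ p) a := by
      rw [hσmono.map_max, hστ a, he_id a haI]
    rw [hminq, hmaxp]
  have lemC : ∀ (g : ℝ → ℝ≥0∞), Measurable g → ∀ a b : ℝ, 0 ≤ a → a ≤ b → b ≤ L →
      ∫⁻ x in Ioc a b, g (τ x) = ∫⁻ r in Ioc (τ a) (τ b), g r * δ r := by
    intro g hg a b ha hab hbL
    rw [← lintegral_map hg hτ_meas, lemB a b ha hab hbL,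
      lintegral_withDensity_eq_lintegral_mul _ hδ_meas hg]
    exact lintegral_congr fun x => mul_comm _ _
  have hIocIcc : ∀ a b : ℝ, Ioc (τ a) (τ b) ⊆ Icc s t := fun a b r hr =>
    ⟨(hτ_Icc a).1.trans hr.1.le, hr.2.trans (hτ_Icc b).2⟩
  have hpoint : ∀ r ∈ Icc s t,
      ENNReal.ofReal (ω (γ' r)) * δ r = ENNReal.ofReal (m₀ r) := by
    intro r _
    rw [hδ_def]
    simp only [hf_def]
    rw [← ENNReal.ofReal_mul (hωpos (γ' r)).le, mul_comm (ω (γ' r)),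
      div_mul_cancel₀ _ (ne_of_gt (hωpos (γ' r)))]
  have hkey : ∀ a b : ℝ, 0 ≤ a → a ≤ b → b ≤ L →
      ∫⁻ x in Ioc a b, ENNReal.ofReal (ω (η x)) =
        ENNReal.ofReal (∫ r in (τ a)..(τ b), m₀ r) := by
    intro a b ha hab hbL
    have hτab : τ a ≤ τ b := hτ_mono hab
    have h1 := lemC (fun r => ENNReal.ofReal (ω (γ' r)))
      (ENNReal.measurable_ofReal.comp (hωmeas.comp hγ'cont.measurable)) a b ha hab hbL
    rw [hη_def]
    simp only at h1 ⊢
    rw [h1, setLIntegral_congr_fun measurableSet_Ioc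
      (fun r hr => hpoint r (hIocIcc a b hr)),
      intervalIntegral.integral_of_le hτab]
    exact (ofReal_integral_eq_lintegral_ofReal
      (hm₀int.mono_set (Ioc_subset_Ioc (hτ_Icc a).1 (hτ_Icc b).2))
      (Eventually.of_forall fun x => hm₀nn x)).symm
  have hspeed : ∀ a b : ℝ, 0 ≤ a → a ≤ b → b ≤ L →
      ENNReal.ofReal (dist (η a) (η b)) ≤ ∫⁻ x in Ioc a b, ENNReal.ofReal (ω (η x)) := by
    intro a b ha hab hbL
    rw [hkey a b ha hab hbL]
    exact ENNReal.ofReal_le_ofReal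
      (hdist' (τ a) (τ b) (hτ_Icc a).1 (hτ_mono hab) (hτ_Icc b).2)
  have hfinL : ∀ a b : ℝ, 0 ≤ a → a ≤ b → b ≤ L →
      ∫⁻ x in Ioc a b, ENNReal.ofReal (ω (η x)) ≠ ⊤ := by
    intro a b ha hab hbL
    rw [hkey a b ha hab hbL]
    exact ENNReal.ofReal_ne_top
  have hint_ωη : ∀ a b : ℝ, 0 ≤ a → a ≤ b → b ≤ L →
      IntegrableOn (fun x => ω (η x)) (Ioc a b) := by
    intro a b ha hab hbL
    refine ⟨hωη_meas.aestronglyMeasurable, ?_⟩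
    rw [hasFiniteIntegral_iff_ofReal (Eventually.of_forall fun x => (hωpos _).le)]
    exact lt_top_iff_ne_top.2 (hfinL a b ha hab hbL)
  have hreal : ∀ a b : ℝ, 0 ≤ a → a ≤ b → b ≤ L →
      dist (η a) (η b) ≤ ∫ r in a..b, ω (η r) := by
    intro a b ha hab hbL
    have h2 : ENNReal.ofReal (∫ r in Ioc a b, ω (η r)) =
        ∫⁻ x in Ioc a b, ENNReal.ofReal (ω (η x)) :=
      ofReal_integral_eq_lintegral_ofReal (hint_ωη a b ha hab hbL)
        (Eventually.of_forall fun x => (hωpos _).le)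
    have h3 := hspeed a b ha hab hbL
    rw [← h2] at h3
    rw [intervalIntegral.integral_of_le hab]
    exact (ENNReal.ofReal_le_ofReal_iff
      (setIntegral_nonneg measurableSet_Ioc (fun x _ => (hωpos _).le))).1 h3
  have hωηii : IntervalIntegrable (fun r => ω (η r)) volume 0 L := by
    rw [intervalIntegrable_iff_integrableOn_Ioc_of_le hL0]
    exact hint_ωη 0 L le_rfl hL0 le_rfl
  have hups : IsUpperSpeedOn η (fun r => ω (η r)) 0 L :=
    ⟨fun r _ => (hωpos _).le, hωηii, fun a b ha hab hbL => hreal a b ha hab hbL⟩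
  -- η L = γ t
  have hηL : η L = γ t := by
    have hτLt : τ L ≤ t := (hτ_Icc L).2
    have hτLs : s ≤ τ L := (hτ_Icc L).1
    have hτL : σ (τ L) = L := by rw [hστ L, he_id L ⟨hL0, le_rfl⟩]
    have hintf : IntegrableOn f (Ioc (τ L) t) :=
      hfint.mono_set (Ioc_subset_Ioc hτLs le_rfl)
    have hzero : ∫ r in Ioc (τ L) t, f r = 0 := by
      have h2 := intervalIntegral.integral_add_adjacent_intervals
        (hfint' s (τ L) ⟨le_rfl, hst⟩ (hτ_Icc L)) (hfint' (τ L) t (hτ_Icc L) ⟨hst, le_rfl⟩)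
      have h3 : σ (τ L) = ∫ u in s..(τ L), f u := hσeq (τ L) (hτ_Icc L)
      have h4 : σ t = ∫ u in s..t, f u := hσeq t ⟨hst, le_rfl⟩
      rw [← intervalIntegral.integral_of_le hτLt]
      rw [h3] at hτL
      rw [h4, hσt] at *
      linarith
    have hfzero : f =ᵐ[volume.restrict (Ioc (τ L) t)] 0 :=
      (integral_eq_zero_iff_of_nonneg_ae (Eventually.of_forall fun x => hf_nn x) hintf).1 hzero
    have hm₀zero : ∀ᵐ r ∂(volume.restrict (Ioc (τ L) t)), m₀ r = 0 := by
      filter_upwards [hfzero] with r hr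
      have hω : ω (γ' r) ≠ 0 := ne_of_gt (hωpos _)
      have h5 : m₀ r / ω (γ' r) = 0 := hr
      rcases div_eq_zero_iff.1 h5 with h | h
      · exact h
      · exact absurd h hω
    have h6 : ∫ r in (τ L)..t, m₀ r = 0 := by
      rw [intervalIntegral.integral_of_le hτLt]
      rw [setIntegral_congr_ae measurableSet_Ioc
        (by filter_upwards [(ae_restrict_iff' measurableSet_Ioc).1 hm₀zero] with r hr hmem;
            exact hr hmem)]
      simp
    have h7 : dist (η L) (γ' t) ≤ 0 := by
      have := hdist' (τ L) t hτLs hτLt le_rfl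
      rw [h6] at this
      exact this
    have h8 : η L = γ' t := by
      rw [← dist_le_zero]; exact h7
    rw [h8, hγ'eq t ⟨hst, le_rfl⟩]
  -- continuity of η
  set W : ℝ → ℝ := fun x => ∫ r in (0:ℝ)..x, ω (η r) with hW_def
  have hWcont : ContinuousOn W (Icc 0 L) := by
    have h := intervalIntegral.continuousOn_primitive_interval' hωηii left_mem_uIcc
    rwa [uIcc_of_le hL0] at h
  have hWdiff : ∀ u v : ℝ, u ∈ Icc 0 L → v ∈ Icc 0 L → u ≤ v →
      dist (η u) (η v) ≤ W v - W u := by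
    intro u v hu hv huv
    have hii : ∀ a b : ℝ, a ∈ Icc 0 L → b ∈ Icc 0 L →
        IntervalIntegrable (fun r => ω (η r)) volume a b := by
      intro a b ha hb
      apply hωηii.mono_set
      rw [uIcc_of_le hL0]
      exact Set.uIcc_subset_Icc ha hb
    have h2 := intervalIntegral.integral_add_adjacent_intervals
      (hii 0 u ⟨le_rfl, hL0⟩ hu) (hii u v hu hv)
    have h3 := hreal u v hu.1 huv hv.2
    rw [hW_def]
    simp only
    linarith
  have hηcont : ContinuousOn η (Icc 0 L) := by
    intro x0 hx0
    have hWc := hWcont x0 hx0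
    rw [Metric.continuousWithinAt_iff] at hWc ⊢
    intro ε hε
    obtain ⟨d, hd, hdq⟩ := hWc ε hε
    refine ⟨d, hd, fun {x} hx hxd => ?_⟩
    have hb : dist (η x) (η x0) ≤ dist (W x) (W x0) := by
      rcases le_total x x0 with h | h
      · rw [dist_comm (η x), dist_comm (W x)]
        calc dist (η x0) (η x) = dist (η x) (η x0) := dist_comm _ _
          _ ≤ W x0 - W x := hWdiff x x0 hx hx0 h
          _ ≤ |W x0 - W x| := le_abs_self _
          _ = dist (W x0) (W x) := (Real.dist_eq _ _).symm
      · calc dist (η x) (η x0) = dist (η x0) (η x) := dist_comm _ _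
          _ ≤ W x - W x0 := hWdiff x0 x hx0 hx h
          _ ≤ |W x - W x0| := le_abs_self _
          _ = dist (W x) (W x0) := (Real.dist_eq _ _).symm
    exact lt_of_le_of_lt hb (hdq hx hxd)
  -- the energy estimate
  refine ⟨η, hηcont, hη0, hηL, hups, ?_⟩
  intro hmint
  have hmint' : IntegrableOn (fun r => m₀ r * ω (γ' r)) (Ioc s t) := by
    refine hmint.1.congr_fun_ae ?_
    filter_upwards [hm_ae, ae_restrict_mem measurableSet_Ioc] with r h1 h2
    rw [← h1, hγ'eq r (Ioc_subset_Icc_self h2)]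
  have hpoint2 : ∀ r ∈ Icc s t,
      ENNReal.ofReal ((ω (γ' r)) ^ 2) * δ r = ENNReal.ofReal (m₀ r * ω (γ' r)) := by
    intro r _
    rw [hδ_def]
    simp only [hf_def]
    rw [← ENNReal.ofReal_mul (sq_nonneg _)]
    congr 1
    have hω : ω (γ' r) ≠ 0 := ne_of_gt (hωpos _)
    field_simp
  have hchain : ∫⁻ x in Ioc 0 L, ENNReal.ofReal ((ω (η x)) ^ 2) =
      ∫⁻ r in Ioc (τ 0) (τ L), ENNReal.ofReal (m₀ r * ω (γ' r)) := by
    have h1 := lemC (fun r => ENNReal.ofReal ((ω (γ' r)) ^ 2))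
      (ENNReal.measurable_ofReal.comp ((hωmeas.comp hγ'cont.measurable).pow_const 2))
      0 L le_rfl hL0 le_rfl
    rw [hη_def]
    simp only at h1 ⊢
    rw [h1]
    exact setLIntegral_congr_fun measurableSet_Ioc
      (fun r hr => hpoint2 r (hIocIcc 0 L hr))
  have hle : ∫⁻ r in Ioc (τ 0) (τ L), ENNReal.ofReal (m₀ r * ω (γ' r)) ≤
      ∫⁻ r in Ioc s t, ENNReal.ofReal (m₀ r * ω (γ' r)) :=
    lintegral_mono_set (Ioc_subset_Ioc (le_of_eq hτ0.symm) (hτ_Icc L).2)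
  have hofreal : ∫⁻ r in Ioc s t, ENNReal.ofReal (m₀ r * ω (γ' r)) =
      ENNReal.ofReal (∫ r in s..t, m₀ r * ω (γ' r)) := by
    rw [intervalIntegral.integral_of_le hst]
    exact (ofReal_integral_eq_lintegral_ofReal hmint'
      (Eventually.of_forall fun r => mul_nonneg (hm₀nn r) (hωpos _).le)).symm
  have hsqfin : ∫⁻ x in Ioc 0 L, ENNReal.ofReal ((ω (η x)) ^ 2) ≠ ⊤ := by
    rw [hchain]
    exact ne_top_of_le_ne_top (by rw [hofreal]; exact ENNReal.ofReal_ne_top) hle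
  have hsqint : IntegrableOn (fun x => (ω (η x)) ^ 2) (Ioc 0 L) := by
    refine ⟨(hωη_meas.pow_const 2).aestronglyMeasurable, ?_⟩
    rw [hasFiniteIntegral_iff_ofReal (Eventually.of_forall fun x => sq_nonneg _)]
    exact lt_top_iff_ne_top.2 hsqfin
  have heq : ∫ r in s..t, m r * ω (γ r) = ∫ r in s..t, m₀ r * ω (γ' r) := by
    refine intervalIntegral.integral_congr_ae ?_
    filter_upwards [hm_ae'] with r hr hmem
    have h2 := hsubIoc s t ⟨le_rfl, hst⟩ ⟨hst, le_rfl⟩ hmem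
    rw [hr h2, hγ'eq r (Ioc_subset_Icc_self h2)]
  rw [heq, intervalIntegral.integral_of_le hL0]
  have e1 : ENNReal.ofReal (∫ x in Ioc 0 L, (ω (η x)) ^ 2) =
      ∫⁻ x in Ioc 0 L, ENNReal.ofReal ((ω (η x)) ^ 2) :=
    ofReal_integral_eq_lintegral_ofReal hsqint (Eventually.of_forall fun x => sq_nonneg _)
  have e2 : ENNReal.ofReal (∫ x in Ioc 0 L, (ω (η x)) ^ 2) ≤
      ENNReal.ofReal (∫ r in s..t, m₀ r * ω (γ' r)) := by
    rw [e1, hchain, ← hofreal]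
    exact hle
  exact (ENNReal.ofReal_le_ofReal_iff
    (intervalIntegral.integral_nonneg hst
      (fun r _ => mul_nonneg (hm₀nn r) (hωpos _).le))).1 e2

/-- (Length and time reparameterization.) -/
theorem reparameterization {X : Type*} [MetricSpace X] [MeasurableSpace X] [BorelSpace X]
    (ω : X → ℝ) (hωpos : ∀ x, 0 < ω x) (hωmeas : Measurable ω)
    (s t : ℝ) (hst : s ≤ t) (γ : ℝ → X) (m : ℝ → ℝ)
    (hγcont : ContinuousOn γ (Set.Icc s t)) (hm : IsUpperSpeedOn γ m s t)
    (hLint : IntervalIntegrable (fun r => m r / ω (γ r)) MeasureTheory.volume s t)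
    (L : ℝ) (hL : L = ∫ r in s..t, m r / ω (γ r)) :
    (∃ η : ℝ → X, ContinuousOn η (Set.Icc 0 L) ∧ η 0 = γ s ∧ η L = γ t ∧
      IsUpperSpeedOn η (fun r => ω (η r)) 0 L) ∧
    (IntervalIntegrable (fun r => m r * ω (γ r)) MeasureTheory.volume s t →
      ∃ η : ℝ → X, ContinuousOn η (Set.Icc 0 L) ∧ η 0 = γ s ∧ η L = γ t ∧
        IsUpperSpeedOn η (fun r => ω (η r)) 0 L ∧
        (∫ r in (0:ℝ)..L, (ω (η r)) ^ 2) ≤ ∫ r in s..t, m r * ω (γ r)) := by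
  obtain ⟨η, h1, h2, h3, h4, h5⟩ :=
    reparam_main ω hωpos hωmeas s t hst γ m hγcont hm hLint L hL
  exact ⟨⟨η, h1, h2, h3, h4⟩, fun hmint => ⟨η, h1, h2, h3, h4, h5 hmint⟩⟩
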